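/- Let p be an odd prime and let α ∈ ℤ_p be a p-adic unit such that −α is not a square in ℚ_p. Let A = diag(α, 1) ∈ M₂(ℚ_p). Suppose h ∈ GL(2,ℚ_p) is such that for every g ∈ GL(2,ℚ_p) satisfying g · A · gᵀ = det(g) · A, the conjugate h g h⁻¹ belongs to ℚ_pˣ · GL(2,ℤ_p) (i.e. is a scalar multiple of a matrix in GL(2,ℤ_p)). Then h itself belongs to ℚ_pˣ · GL(2,ℤ_p). (In other words, PGL(2,ℤ_p) is the unique maximal compact subgroup of PGL(2,ℚ_p) containing the stabilizer of v_α = (α,0,1).) -/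

import Mathlib

open Matrix Polynomial



lemma toZMod_eq_zero_iff' {p : ℕ} [Fact p.Prime] (x : ℤ_[p]) :
    PadicInt.toZMod x = 0 ↔ ‖x‖ < 1 := by
  rw [← RingHom.mem_ker, PadicInt.ker_toZMod, PadicInt.maximalIdeal_eq_span_p,
    Ideal.mem_span_singleton, ← PadicInt.norm_lt_one_iff_dvd]

lemma hensel_sq' {p : ℕ} [Fact p.Prime] (hp : p ≠ 2) (α : ℤ_[p]) (hu : IsUnit α)
    (t : ZMod p) (ht : t ^ 2 = - PadicInt.toZMod α) : IsSquare (-(α : ℚ_[p])) := by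
  have hα1 : ‖α‖ = 1 := PadicInt.isUnit_iff.mp hu
  have hαz : PadicInt.toZMod α ≠ 0 := by
    simp only [ne_eq, toZMod_eq_zero_iff', hα1]
    exact lt_irrefl 1
  have ht0 : t ≠ 0 := by
    intro h0; apply hαz; rw [h0] at ht; simpa using ht.symm
  set a : ℤ_[p] := (t.val : ℤ_[p]) with ha
  have hta : PadicInt.toZMod a = t := by
    rw [ha, map_natCast, ZMod.natCast_zmod_val]
  have hanorm : ‖a‖ = 1 := by
    refine le_antisymm (PadicInt.norm_le_one a) ?_
    by_contra hlt
    push_neg at hlt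
    exact ht0 (by rw [← hta]; exact (toZMod_eq_zero_iff' a).2 hlt)
  have h2 : ‖(2 : ℤ_[p])‖ = 1 := by
    refine le_antisymm (PadicInt.norm_le_one _) ?_
    by_contra hlt
    push_neg at hlt
    have : PadicInt.toZMod (2 : ℤ_[p]) = 0 := (toZMod_eq_zero_iff' _).2 hlt
    rw [map_ofNat] at this
    have : ((2 : ℕ) : ZMod p) = 0 := by exact_mod_cast this
    rw [ZMod.natCast_eq_zero_iff] at this
    rcases (Nat.prime_two.eq_one_or_self_of_dvd p this) with h1 | h1
    · exact Nat.Prime.one_lt (Fact.out) |>.ne' h1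
    · exact hp h1
  set F : Polynomial ℤ_[p] := X ^ 2 + C α with hF
  have hevF : ∀ z : ℤ_[p], F.eval z = z ^ 2 + α := by intro z; simp [hF]
  have hevD : ∀ z : ℤ_[p], (F.derivative).eval z = 2 * z := by
    intro z; simp [hF, derivative_X_pow, one_add_one_eq_two]
  have hlt : ‖F.eval a‖ < ‖(F.derivative).eval a‖ ^ 2 := by
    rw [hevF, hevD, norm_mul, h2, hanorm]
    have : PadicInt.toZMod (a ^ 2 + α) = 0 := by
      rw [map_add, map_pow, hta, ht]; ring
    have := (toZMod_eq_zero_iff' _).1 this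
    simpa using this
  obtain ⟨z, hz, -⟩ := hensels_lemma hlt
  rw [Polynomial.coe_aeval_eq_eval, hevF] at hz
  refine ⟨(z : ℚ_[p]), ?_⟩
  have h0 : (z : ℚ_[p]) ^ 2 + (α : ℚ_[p]) = 0 := by exact_mod_cast congrArg (fun w : ℤ_[p] => (w : ℚ_[p])) hz
  linear_combination -h0



set_option linter.unnecessarySimpa false in
lemma finale' {F : Type*} [Field F] (K H : Matrix (Fin 2) (Fin 2) F) (v w : F)
    (hv : v ≠ 0)
    (hKH : K * H = H * !![0, v * w; -v, 0])
    (hK2 : K * K = !![-(v ^ 2 * w), 0; 0, -(v ^ 2 * w)])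
    (hH : H ≠ 0) (hdet : H.det = 0) : ∃ t : F, t ^ 2 = -w := by
  have E1 := congrFun (congrFun hKH 0) 0
  have E3 := congrFun (congrFun hKH 1) 0
  have S1 := congrFun (congrFun hK2 0) 0
  have S2 := congrFun (congrFun hK2 0) 1
  have S3 := congrFun (congrFun hK2 1) 0
  have S4 := congrFun (congrFun hK2 1) 1
  simp only [Matrix.mul_apply, Fin.sum_univ_two, Matrix.of_apply, Matrix.cons_val_zero,
    Matrix.cons_val_one, Matrix.head_cons, Matrix.head_fin_const, Matrix.cons_val_fin_one,
    mul_zero, zero_add, add_zero, mul_neg, zero_mul] at E1 E3 S1 S2 S3 S4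
  have hdet' : H 0 0 * H 1 1 - H 0 1 * H 1 0 = 0 := by
    simpa [Matrix.det_fin_two] using hdet
  have hex : ¬ (H 0 0 = 0 ∧ H 0 1 = 0 ∧ H 1 0 = 0 ∧ H 1 1 = 0) := by
    rintro ⟨h1, h2, h3, h4⟩
    apply hH
    ext i j
    fin_cases i <;> fin_cases j <;> simpa [h1, h2, h3, h4]
  by_cases hcol : H 0 0 = 0 ∧ H 1 0 = 0
  · obtain ⟨hx, hz⟩ := hcol
    rw [hx, hz] at E1 E3
    have hy : H 0 1 = 0 := by
      have h5 : H 0 1 * v = 0 := by linear_combination E1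
      rcases mul_eq_zero.1 h5 with h | h
      · exact h
      · exact absurd h hv
    have hs : H 1 1 = 0 := by
      have h5 : H 1 1 * v = 0 := by linear_combination E3
      rcases mul_eq_zero.1 h5 with h | h
      · exact h
      · exact absurd h hv
    exact absurd ⟨hx, hy, hz, hs⟩ hex
  · push_neg at hcol
    obtain ⟨lam, hy, hs⟩ : ∃ lam : F, H 0 1 = lam * H 0 0 ∧ H 1 1 = lam * H 1 0 := by
      by_cases hx : H 0 0 = 0
      · have hz := hcol hx
        refine ⟨H 1 1 / H 1 0, ?_, ?_⟩
        · rw [hx, mul_zero]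
          rw [hx] at hdet'
          have h5 : H 0 1 * H 1 0 = 0 := by linear_combination -hdet'
          rcases mul_eq_zero.1 h5 with h | h
          · exact h
          · exact absurd h hz
        · rw [div_mul_cancel₀ _ hz]
      · refine ⟨H 0 1 / H 0 0, ?_, ?_⟩
        · rw [div_mul_cancel₀ _ hx]
        · rw [div_mul_eq_mul_div, eq_div_iff hx]
          linear_combination hdet'
    rw [hy] at E1
    rw [hs] at E3
    set x := H 0 0
    set z := H 1 0
    set k1 := K 0 0; set k2 := K 0 1; set k3 := K 1 0; set k4 := K 1 1
    set μ : F := -(v * lam) with hμ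
    have e1 : k1 * x + k2 * z = μ * x := by rw [hμ]; linear_combination E1
    have e3 : k3 * x + k4 * z = μ * z := by rw [hμ]; linear_combination E3
    have hx2 : μ ^ 2 * x = -(v ^ 2 * w) * x := by
      linear_combination (-(μ + k1)) * e1 - k2 * e3 + x * S1 + z * S2
    have hz2 : μ ^ 2 * z = -(v ^ 2 * w) * z := by
      linear_combination (-(μ + k4)) * e3 - k3 * e1 + z * S4 + x * S3
    have hμ2 : μ ^ 2 = -(v ^ 2 * w) := by
      by_cases hx : x = 0
      · have hz := hcol hx
        exact mul_right_cancel₀ hz (by linear_combination hz2)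
      · exact mul_right_cancel₀ hx (by linear_combination hx2)
    refine ⟨lam, ?_⟩
    have hv2 : v ^ 2 ≠ 0 := pow_ne_zero _ hv
    have h6 : v ^ 2 * (lam ^ 2 - -w) = 0 := by
      rw [hμ] at hμ2
      linear_combination hμ2
    rcases mul_eq_zero.1 h6 with h | h
    · exact absurd h hv2
    · linear_combination h

lemma transpose_fin2 {R : Type*} [CommRing R] (a b c d : R) :
    (!![a, b; c, d])ᵀ = !![a, c; b, d] := by
  ext i j; fin_cases i <;> fin_cases j <;> rfl

lemma smul_fin2 {R : Type*} [CommRing R] (r a b c d : R) :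
    r • !![a, b; c, d] = !![r * a, r * b; r * c, r * d] := by
  ext i j; fin_cases i <;> fin_cases j <;> simp

lemma fin2_ext {R : Type*} [CommRing R] {a b c d e f g i : R}
    (h1 : a = e) (h2 : b = f) (h3 : c = g) (h4 : d = i) :
    !![a, b; c, d] = !![e, f; g, i] := by rw [h1, h2, h3, h4]

theorem stmt_4 (p : ℕ) [Fact p.Prime] (hp : p ≠ 2)
    (α : ℤ_[p]) (hu : IsUnit α) (hns : ¬ IsSquare (-(α : ℚ_[p])))
    (h : Matrix (Fin 2) (Fin 2) ℚ_[p]) (hh : IsUnit h.det)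
    (hconj : ∀ g : Matrix (Fin 2) (Fin 2) ℚ_[p], IsUnit g.det →
      g * !![(α : ℚ_[p]), 0; 0, 1] * gᵀ = g.det • !![(α : ℚ_[p]), 0; 0, 1] →
      ∃ c : ℚ_[p], c ≠ 0 ∧ (∀ i j, ‖(c • (h * g * h⁻¹)) i j‖ ≤ 1) ∧
        ‖(c • (h * g * h⁻¹)).det‖ = 1) :
    ∃ c : ℚ_[p], c ≠ 0 ∧ (∀ i j, ‖(c • h) i j‖ ≤ 1) ∧ ‖(c • h).det‖ = 1 := by
  have hα1 : ‖(α : ℚ_[p])‖ = 1 := by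
    rw [PadicInt.padic_norm_e_of_padicInt]; exact PadicInt.isUnit_iff.mp hu
  have hα0 : (α : ℚ_[p]) ≠ 0 := by
    intro h0; rw [h0, norm_zero] at hα1; norm_num at hα1
  set J : Matrix (Fin 2) (Fin 2) ℚ_[p] := !![0, (α : ℚ_[p]); -1, 0] with hJdef
  have hdetJ : J.det = (α : ℚ_[p]) := by rw [hJdef, Matrix.det_fin_two_of]; ring
  have hJA : J * !![(α : ℚ_[p]), 0; 0, 1] * Jᵀ = J.det • !![(α : ℚ_[p]), 0; 0, 1] := by
    rw [hdetJ, hJdef, transpose_fin2, Matrix.mul_fin_two, Matrix.mul_fin_two, smul_fin2]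
    apply fin2_ext <;> ring
  obtain ⟨c, hc0, hcint, hcdet⟩ := hconj J (by rw [hdetJ]; exact isUnit_iff_ne_zero.2 hα0) hJA
  have hdeth : h.det ≠ 0 := hh.ne_zero
  have hinv : h⁻¹ * h = 1 := Matrix.nonsing_inv_mul h hh
  have hinv' : h * h⁻¹ = 1 := Matrix.mul_nonsing_inv h hh
  set M : Matrix (Fin 2) (Fin 2) ℚ_[p] := h * J * h⁻¹ with hM
  have hMdet : M.det = (α : ℚ_[p]) := by
    rw [hM, Matrix.det_mul, Matrix.det_mul, Matrix.det_nonsing_inv, hdetJ,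
      Ring.inverse_eq_inv']
    field_simp
  have hdetK : (c • M).det = c ^ 2 * (α : ℚ_[p]) := by
    rw [Matrix.det_smul, hMdet]; norm_num
  have hc1 : ‖c‖ = 1 := by
    rw [hdetK, norm_mul, norm_pow, hα1, mul_one] at hcdet
    nlinarith [norm_nonneg c]
  have hJJ : J * J = !![-(α : ℚ_[p]), 0; 0, -(α : ℚ_[p])] := by
    rw [hJdef, Matrix.mul_fin_two]; apply fin2_ext <;> ring
  have hscal : !![-(α : ℚ_[p]), 0; 0, -(α : ℚ_[p])]
      = (-(α : ℚ_[p])) • (1 : Matrix (Fin 2) (Fin 2) ℚ_[p]) := by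
    rw [Matrix.one_fin_two, smul_fin2]; apply fin2_ext <;> ring
  have hMM : M * M = (-(α : ℚ_[p])) • (1 : Matrix (Fin 2) (Fin 2) ℚ_[p]) := by
    rw [hM]
    calc h * J * h⁻¹ * (h * J * h⁻¹) = h * (J * ((h⁻¹ * h) * (J * h⁻¹))) := by
          simp only [Matrix.mul_assoc]
      _ = h * (J * J) * h⁻¹ := by rw [hinv, Matrix.one_mul]; simp only [Matrix.mul_assoc]
      _ = (-(α : ℚ_[p])) • (h * h⁻¹) := by
          rw [hJJ, hscal, Matrix.mul_smul, Matrix.smul_mul, Matrix.mul_one]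
      _ = _ := by rw [hinv']
  have hKK : (c • M) * (c • M)
      = !![-(c ^ 2 * (α : ℚ_[p])), 0; 0, -(c ^ 2 * (α : ℚ_[p]))] := by
    rw [Matrix.smul_mul, Matrix.mul_smul, smul_smul, hMM, smul_smul,
      Matrix.one_fin_two, smul_fin2]
    apply fin2_ext <;> ring
  -- scale h
  obtain ⟨q, -, hq⟩ := Finset.exists_max_image (Finset.univ : Finset (Fin 2 × Fin 2))
    (fun q => ‖h q.1 q.2‖) ⟨(0, 0), Finset.mem_univ _⟩
  have hmax : ∀ a b, ‖h a b‖ ≤ ‖h q.1 q.2‖ := fun a b => hq (a, b) (Finset.mem_univ _)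
  have hij0 : h q.1 q.2 ≠ 0 := by
    intro h0
    have hz : h = 0 := by
      ext a b
      have h5 := hmax a b
      rw [h0, norm_zero] at h5
      simpa using norm_le_zero_iff.mp h5
    rw [hz] at hh
    simp [Matrix.det_zero] at hh
  set d : ℚ_[p] := (h q.1 q.2)⁻¹ with hd
  have hd0 : d ≠ 0 := inv_ne_zero hij0
  have hpos : 0 < ‖h q.1 q.2‖ := norm_pos_iff.mpr hij0
  have hent : ∀ a b, ‖(d • h) a b‖ ≤ 1 := by
    intro a b
    rw [Matrix.smul_apply, smul_eq_mul, norm_mul, hd, norm_inv, inv_mul_le_iff₀ hpos, mul_one]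
    exact hmax a b
  refine ⟨d, hd0, hent, ?_⟩
  have hprod : ∀ (a b a' b' : Fin 2), ‖(d • h) a b * (d • h) a' b'‖ ≤ 1 := by
    intro a b a' b'
    rw [norm_mul]
    nlinarith [hent a b, hent a' b', norm_nonneg ((d • h) a b), norm_nonneg ((d • h) a' b')]
  have hle1 : ‖(d • h).det‖ ≤ 1 := by
    rw [Matrix.det_fin_two, sub_eq_add_neg]
    exact le_trans (Padic.nonarchimedean _ _)
      (max_le (hprod _ _ _ _) (by rw [norm_neg]; exact hprod _ _ _ _))
  by_contra hne
  have hlt1 : ‖(d • h).det‖ < 1 := lt_of_le_of_ne hle1 hne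
  -- lift to ℤ_[p]
  set f : ℤ_[p] →+* ℚ_[p] := PadicInt.Coe.ringHom with hf
  set Hz : Matrix (Fin 2) (Fin 2) ℤ_[p] :=
    Matrix.of (fun a b => (⟨(d • h) a b, hent a b⟩ : ℤ_[p])) with hHzdef
  set Kz : Matrix (Fin 2) (Fin 2) ℤ_[p] :=
    Matrix.of (fun a b => (⟨(c • M) a b, hcint a b⟩ : ℤ_[p])) with hKzdef
  set cz : ℤ_[p] := ⟨c, le_of_eq hc1⟩ with hcz
  have hHm : Hz.map f = d • h := by ext a b; rfl
  have hKm : Kz.map f = c • M := by ext a b; rfl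
  have hGm : (!![0, cz * α; -cz, 0] : Matrix (Fin 2) (Fin 2) ℤ_[p]).map f = c • J := by
    have hfc : ∀ x : ℤ_[p], f x = (x : ℚ_[p]) := fun _ => rfl
    have hcc : ((cz : ℤ_[p]) : ℚ_[p]) = c := rfl
    rw [hJdef, smul_fin2]
    ext a b
    fin_cases a <;> fin_cases b <;>
      simp [Matrix.map_apply, hfc, PadicInt.coe_mul, PadicInt.coe_neg, PadicInt.coe_pow,
        PadicInt.coe_zero, hcc] <;> ring
  have key : (c • M) * (d • h) = (d • h) * (c • J) := by
    rw [hM]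
    calc (c • (h * J * h⁻¹)) * (d • h) = (c * d) • (h * J * (h⁻¹ * h)) := by
          rw [Matrix.smul_mul, Matrix.mul_smul, smul_smul]; simp only [Matrix.mul_assoc]
      _ = (c * d) • (h * J) := by rw [hinv, Matrix.mul_one]
      _ = (d • h) * (c • J) := by
          rw [Matrix.smul_mul, Matrix.mul_smul, smul_smul, mul_comm]
  have hZrel : Kz * Hz = Hz * !![0, cz * α; -cz, 0] := by
    have h1 : (Kz * Hz).map f = (Hz * !![0, cz * α; -cz, 0]).map f := by
      rw [Matrix.map_mul, Matrix.map_mul, hHm, hKm, hGm, key]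
    ext a b
    have h2 := congrFun (congrFun h1 a) b
    rw [Matrix.map_apply, Matrix.map_apply] at h2
    exact Subtype.ext h2
  have hZKK : Kz * Kz = !![-(cz ^ 2 * α), 0; 0, -(cz ^ 2 * α)] := by
    have h1 : (Kz * Kz).map f
        = ((!![-(cz ^ 2 * α), 0; 0, -(cz ^ 2 * α)]) : Matrix (Fin 2) (Fin 2) ℤ_[p]).map f := by
      have hfc : ∀ x : ℤ_[p], f x = (x : ℚ_[p]) := fun _ => rfl
      have hcc : ((cz : ℤ_[p]) : ℚ_[p]) = c := rfl
      rw [Matrix.map_mul, hKm, hKK]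
      ext a b
      fin_cases a <;> fin_cases b <;>
        simp [Matrix.map_apply, hfc, PadicInt.coe_mul, PadicInt.coe_neg, PadicInt.coe_pow,
          PadicInt.coe_zero, hcc] 
    ext a b
    have h2 := congrFun (congrFun h1 a) b
    rw [Matrix.map_apply, Matrix.map_apply] at h2
    exact Subtype.ext h2
  -- reduce mod p
  set g : ℤ_[p] →+* ZMod p := PadicInt.toZMod with hg
  have hvne : g cz ≠ 0 := by
    rw [hg, Ne, toZMod_eq_zero_iff', PadicInt.norm_def]
    show ¬ ‖c‖ < 1
    rw [hc1]
    exact lt_irrefl 1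
  have hKHb : (Kz.map g) * (Hz.map g) = (Hz.map g) * !![0, (g cz) * (g α); -(g cz), 0] := by
    rw [← Matrix.map_mul, hZrel, Matrix.map_mul]
    congr 1
    ext a b
    fin_cases a <;> fin_cases b <;> simp [Matrix.map_apply]
  have hK2b : (Kz.map g) * (Kz.map g)
      = !![-((g cz) ^ 2 * (g α)), 0; 0, -((g cz) ^ 2 * (g α))] := by
    rw [← Matrix.map_mul, hZKK]
    ext a b
    fin_cases a <;> fin_cases b <;> simp [Matrix.map_apply]
  have hHbne : Hz.map g ≠ 0 := by
    intro h0
    have h1 : Hz q.1 q.2 = 1 := by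
      apply Subtype.ext
      show (d • h) q.1 q.2 = 1
      rw [Matrix.smul_apply, smul_eq_mul, hd, inv_mul_cancel₀ hij0]
    have h2 := congrFun (congrFun h0 q.1) q.2
    rw [Matrix.map_apply, h1, _root_.map_one, Matrix.zero_apply] at h2
    exact one_ne_zero h2
  have hdetb : (Hz.map g).det = 0 := by
    have h4 : (Hz.map ⇑g).det = g Hz.det := by
      rw [← RingHom.mapMatrix_apply, ← RingHom.map_det]
    rw [h4, hg]
    apply (toZMod_eq_zero_iff' _).2
    have h3 : ((Hz.det : ℚ_[p])) = (d • h).det := by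
      rw [show ((Hz.det : ℚ_[p])) = f Hz.det from rfl, RingHom.map_det,
        RingHom.mapMatrix_apply, hHm]
    rw [PadicInt.norm_def, h3]
    exact hlt1
  obtain ⟨t, ht⟩ := finale' (Kz.map g) (Hz.map g) (g cz) (g α) hvne hKHb hK2b hHbne hdetb
  exact hns (hensel_sq' hp α hu t (by rw [ht, hg]))
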